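/- Let Γ be a nonempty finite set and N a quadratic normalisation on Γ of breadth (3,3), i.e., for every length-three word w over Γ, N(w) = N̄_{121}(w) = N̄_{212}(w). Define the one-step rewriting relation → on words by: u → v iff u = p ++ [a, b] ++ s with N̄(ab) ≠ ab and v = p ++ N̄(ab) ++ s. Then every rewriting sequence starting from a word of length p has length at most p(p−1)/2. -/

import Mathlib

namespace Stmt8X
set_option maxHeartbeats 1000000
open Equiv Finset
variable {n : ℕ}

def sw (n : ℕ) (c : ℕ) : Equiv.Perm (Fin n) :=
  if h : c + 1 < n then Equiv.swap ⟨c, by omega⟩ ⟨c + 1, h⟩ else 1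

def invs (σ : Equiv.Perm (Fin n)) : Finset (Fin n × Fin n) :=
  Finset.univ.filter fun q => q.1 < q.2 ∧ σ q.2 < σ q.1

def plen (σ : Equiv.Perm (Fin n)) : ℕ := (invs σ).card

lemma sw_def (c : ℕ) (h : c + 1 < n) :
    sw n c = Equiv.swap ⟨c, by omega⟩ ⟨c + 1, h⟩ := by simp [sw, h]

lemma sw_mul_self' (c : ℕ) : sw n c * sw n c = 1 := by
  by_cases h : c + 1 < n
  · rw [sw_def c h, Equiv.swap_mul_self]
  · simp [sw, h]

lemma sw_inv (c : ℕ) : (sw n c)⁻¹ = sw n c :=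
  inv_eq_of_mul_eq_one_left (sw_mul_self' c)

lemma sw_apply_of_ne (c : ℕ) (x : Fin n) (hx1 : (x : ℕ) ≠ c) (hx2 : (x : ℕ) ≠ c + 1) :
    sw n c x = x := by
  by_cases h : c + 1 < n
  · rw [sw_def c h]
    apply Equiv.swap_apply_of_ne_of_ne <;> · simp only [ne_eq, Fin.ext_iff]; omega
  · simp [sw, h]

lemma sw_app₁ (c : ℕ) (h : c + 1 < n) (x : Fin n) (hx : (x : ℕ) = c) :
    sw n c x = ⟨c + 1, h⟩ := by
  have hx' : x = ⟨c, Nat.lt_of_succ_lt h⟩ := by apply Fin.ext; simpa using hx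
  subst hx'
  rw [sw_def c h]; exact Equiv.swap_apply_left _ _

lemma sw_app₂ (c : ℕ) (h : c + 1 < n) (x : Fin n) (hx : (x : ℕ) = c + 1) :
    sw n c x = ⟨c, Nat.lt_of_succ_lt h⟩ := by
  have hx' : x = ⟨c + 1, h⟩ := by apply Fin.ext; simpa using hx
  subst hx'
  rw [sw_def c h]; exact Equiv.swap_apply_right _ _

lemma mulinv_apply (c : ℕ) (σ : Equiv.Perm (Fin n)) (x : Fin n) :
    (sw n c * σ)⁻¹ x = σ⁻¹ (sw n c x) := by
  rw [mul_inv_rev, sw_inv, Equiv.Perm.mul_apply]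

lemma swap_conj_swap {α : Type} [DecidableEq α] (f : Equiv.Perm α) (hf : f * f = 1)
    (x y : α) : f * Equiv.swap x y * f = Equiv.swap (f x) (f y) := by
  have hinv : f⁻¹ = f := by
    rw [← mul_one f⁻¹, ← hf, ← mul_assoc, inv_mul_cancel, one_mul]
  rw [Equiv.swap_apply_apply, hinv]

lemma sw_braid (c : ℕ) (h : c + 2 < n) :
    sw n c * sw n (c + 1) * sw n c = sw n (c + 1) * sw n c * sw n (c + 1) := by
  have h1 : c + 1 < n := by omega
  have h2 : c + 1 + 1 < n := by omega
  rw [sw_def c h1, sw_def (c + 1) h2]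
  rw [swap_conj_swap _ (Equiv.swap_mul_self _ _), swap_conj_swap _ (Equiv.swap_mul_self _ _)]
  rw [Equiv.swap_apply_right]
  rw [Equiv.swap_apply_of_ne_of_ne (by simp only [ne_eq, Fin.ext_iff]; omega)
      (by simp only [ne_eq, Fin.ext_iff]; omega)]
  rw [Equiv.swap_apply_of_ne_of_ne (by simp only [ne_eq, Fin.ext_iff]; omega)
      (by simp only [ne_eq, Fin.ext_iff]; omega)]
  rw [Equiv.swap_apply_left]

lemma sw_comm (c d : ℕ) (hcd : c + 2 ≤ d) :
    sw n c * sw n d = sw n d * sw n c := by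
  by_cases h1 : c + 1 < n
  case neg => simp [sw, h1]
  by_cases h2 : d + 1 < n
  case neg => simp [sw, h2]
  have key : sw n c * sw n d * sw n c = sw n d := by
    rw [sw_def d h2, sw_def c h1]
    rw [swap_conj_swap _ (Equiv.swap_mul_self _ _)]
    rw [Equiv.swap_apply_of_ne_of_ne (by simp only [ne_eq, Fin.ext_iff]; omega)
        (by simp only [ne_eq, Fin.ext_iff]; omega)]
    rw [Equiv.swap_apply_of_ne_of_ne (by simp only [ne_eq, Fin.ext_iff]; omega)
        (by simp only [ne_eq, Fin.ext_iff]; omega)]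
  calc sw n c * sw n d = sw n c * sw n d * sw n c * sw n c := by
        rw [mul_assoc _ _ (sw n c), sw_mul_self', mul_one]
    _ = sw n d * sw n c := by rw [key]

lemma swap_lt_iff (c : ℕ) (h : c + 1 < n) (x y : Fin n)
    (h1 : ¬(x = ⟨c, by omega⟩ ∧ y = ⟨c + 1, h⟩))
    (h2 : ¬(x = ⟨c + 1, h⟩ ∧ y = ⟨c, by omega⟩)) :
    (Equiv.swap ⟨c, by omega⟩ (⟨c + 1, h⟩ : Fin n) x <
      Equiv.swap ⟨c, by omega⟩ (⟨c + 1, h⟩ : Fin n) y ↔ x < y) := by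
  simp only [Equiv.swap_apply_def]
  split_ifs <;>
    simp only [Fin.lt_def, Fin.ext_iff, not_and] at * <;> omega

lemma plen_swap_asc (c : ℕ) (h : c + 1 < n) (σ : Equiv.Perm (Fin n))
    (ha : σ⁻¹ ⟨c, by omega⟩ < σ⁻¹ ⟨c + 1, h⟩) :
    plen (sw n c * σ) = plen σ + 1 := by
  have hA : (⟨c, by omega⟩ : Fin n) < ⟨c + 1, h⟩ := by simp [Fin.lt_def]
  set A : Fin n := ⟨c, by omega⟩ with hAdef
  set B : Fin n := ⟨c + 1, h⟩ with hBdef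
  have hkey : invs (sw n c * σ) = insert (σ⁻¹ A, σ⁻¹ B) (invs σ) := by
    ext ⟨u, v⟩
    simp only [invs, Finset.mem_insert, Finset.mem_filter, Finset.mem_univ, true_and,
      Equiv.Perm.mul_apply, Prod.mk.injEq, sw_def c h]
    constructor
    · rintro ⟨huv, hlt⟩
      by_cases c1 : σ u = A ∧ σ v = B
      · exact Or.inl ⟨by rw [← c1.1]; simp, by rw [← c1.2]; simp⟩
      · by_cases c2 : σ u = B ∧ σ v = A
        · exfalso
          have hu' : u = σ⁻¹ B := by rw [← c2.1]; simp
          have hv' : v = σ⁻¹ A := by rw [← c2.2]; simp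
          rw [hu', hv'] at huv
          exact absurd huv (not_lt.2 (le_of_lt ha))
        · have := swap_lt_iff c h (σ v) (σ u) (by tauto) (by tauto)
          exact Or.inr ⟨huv, (this).1 hlt⟩
    · rintro (⟨hu, hv⟩ | ⟨huv, hlt⟩)
      · subst hu; subst hv
        refine ⟨ha, ?_⟩
        show (Equiv.swap A B) (σ (σ⁻¹ B)) < (Equiv.swap A B) (σ (σ⁻¹ A))
        simp only [Equiv.Perm.coe_inv, Equiv.apply_symm_apply]
        rw [Equiv.swap_apply_right, Equiv.swap_apply_left]; exact hA
      · refine ⟨huv, ?_⟩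
        by_cases c1 : σ v = A ∧ σ u = B
        · exfalso
          have hu' : u = σ⁻¹ B := by rw [← c1.2]; simp
          have hv' : v = σ⁻¹ A := by rw [← c1.1]; simp
          rw [hu', hv'] at huv
          exact absurd huv (not_lt.2 (le_of_lt ha))
        · by_cases c2 : σ v = B ∧ σ u = A
          · exfalso
            rw [c2.1, c2.2] at hlt
            exact absurd hlt (not_lt.2 (le_of_lt hA))
          · have := swap_lt_iff c h (σ v) (σ u) (by tauto) (by tauto)
            exact this.2 hlt
  have hnotmem : (σ⁻¹ A, σ⁻¹ B) ∉ invs σ := by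
    simp only [invs, Finset.mem_filter, Finset.mem_univ, true_and, not_and]
    intro _
    simp [not_lt.2 (le_of_lt hA)]
  rw [plen, hkey, Finset.card_insert_of_notMem hnotmem]; rfl

lemma plen_swap_desc (c : ℕ) (h : c + 1 < n) (σ : Equiv.Perm (Fin n))
    (hd : σ⁻¹ ⟨c + 1, h⟩ < σ⁻¹ ⟨c, by omega⟩) :
    plen (sw n c * σ) + 1 = plen σ := by
  set τ := sw n c * σ with hτ
  have hστ : σ = sw n c * τ := by
    rw [hτ, ← mul_assoc, sw_mul_self', one_mul]
  have h1 : τ⁻¹ ⟨c, by omega⟩ = σ⁻¹ ⟨c + 1, h⟩ := by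
    rw [hτ, mulinv_apply, sw_app₁ c h _ rfl]
  have h2 : τ⁻¹ ⟨c + 1, h⟩ = σ⁻¹ ⟨c, by omega⟩ := by
    rw [hτ, mulinv_apply, sw_app₂ c h _ rfl]
  have := plen_swap_asc c h τ (by rw [h1, h2]; exact hd)
  rw [← hστ] at this
  omega

lemma inv_ne (c : ℕ) (h : c + 1 < n) (σ : Equiv.Perm (Fin n)) :
    σ⁻¹ ⟨c, by omega⟩ ≠ σ⁻¹ ⟨c + 1, h⟩ := by
  simp only [ne_eq, EmbeddingLike.apply_eq_iff_eq, Fin.ext_iff]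
  omega

lemma plen_swap_le (c : ℕ) (σ : Equiv.Perm (Fin n)) :
    plen (sw n c * σ) ≤ plen σ + 1 := by
  by_cases h : c + 1 < n
  · rcases lt_or_gt_of_ne (inv_ne c h σ) with ha | hd
    · rw [plen_swap_asc c h σ ha]
    · have := plen_swap_desc c h σ hd; omega
  · simp [sw, h]

lemma asc_of_plen_succ (c : ℕ) (h : c + 1 < n) (σ : Equiv.Perm (Fin n))
    (hp : plen (sw n c * σ) = plen σ + 1) :
    σ⁻¹ ⟨c, by omega⟩ < σ⁻¹ ⟨c + 1, h⟩ := by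
  rcases lt_or_gt_of_ne (inv_ne c h σ) with ha | hd
  · exact ha
  · have := plen_swap_desc c h σ hd; omega

lemma plen_one : plen (1 : Equiv.Perm (Fin n)) = 0 := by
  rw [plen, Finset.card_eq_zero, invs]
  ext ⟨u, v⟩
  simp only [Finset.mem_filter, Finset.mem_univ, true_and, Finset.notMem_empty, iff_false,
    not_and, Equiv.Perm.one_apply]
  intro h
  obtain ⟨h1, h2⟩ := (Finset.mem_filter.1 h).2
  exact absurd h1 (not_lt.2 (le_of_lt h2))

lemma strictMono_eq_one (σ : Equiv.Perm (Fin n))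
    (hmono : ∀ c : ℕ, ∀ h : c + 1 < n, σ ⟨c, by omega⟩ < σ ⟨c + 1, h⟩) : σ = 1 := by
  have hsm : StrictMono σ := by
    have step : ∀ k : ℕ, ∀ a b : Fin n, (b : ℕ) = (a : ℕ) + k + 1 → σ a < σ b := by
      intro k
      induction k with
      | zero =>
        intro a b hb
        have := hmono a (by omega)
        have ha : a = ⟨(a : ℕ), a.isLt⟩ := by apply Fin.ext; rfl
        have hb' : b = ⟨(a : ℕ) + 1, by omega⟩ := by
          apply Fin.ext; simp only [Fin.val_mk]; omega
        rw [ha, hb']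
        exact hmono (a : ℕ) (by omega)
      | succ k IH =>
        intro a b hb
        have hm : ((a : ℕ) + k + 1) < n := by omega
        have h1 : σ a < σ ⟨(a : ℕ) + k + 1, hm⟩ := IH a _ rfl
        have h2 : σ ⟨(a : ℕ) + k + 1, hm⟩ < σ b := by
          have hb' : b = ⟨(a : ℕ) + k + 1 + 1, by omega⟩ := by
            apply Fin.ext; simp only [Fin.val_mk]; omega
          rw [hb']
          exact hmono ((a : ℕ) + k + 1) (by omega)
        exact h1.trans h2
    intro a b hab
    exact step ((b : ℕ) - (a : ℕ) - 1) a b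
      (by have hab' : (a : ℕ) < (b : ℕ) := hab; omega)
  -- strictMono bijection on Fin n is the identity
  have hle : ∀ k : ℕ, ∀ hk : k < n, k ≤ ((σ ⟨k, hk⟩ : Fin n) : ℕ) := by
    intro k
    induction k with
    | zero => intro hk; exact Nat.zero_le _
    | succ k IH =>
      intro hk
      have h1 := IH (by omega)
      have h2 : σ ⟨k, by omega⟩ < σ ⟨k + 1, hk⟩ := hsm (by simp [Fin.lt_def])
      rw [Fin.lt_def] at h2
      omega
  have hles : ∀ x : Fin n, (x : ℕ) ≤ (σ x : ℕ) := by
    intro x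
    have := hle (x : ℕ) x.isLt
    simpa using this
  have hinvsm : StrictMono (σ⁻¹ : Equiv.Perm (Fin n)) := by
    intro a b hab
    by_contra hcon
    push_neg at hcon
    rcases lt_or_eq_of_le hcon with hlt | heq
    · have := hsm hlt
      simp only [Equiv.Perm.coe_inv, Equiv.apply_symm_apply] at this
      exact absurd hab (not_lt.2 (le_of_lt this))
    · have hba : b = a := by
        have := congrArg σ heq
        simpa using this
      exact absurd hab (not_lt.2 (le_of_eq hba))
  have hlesInv : ∀ x : Fin n, (x : ℕ) ≤ ((σ⁻¹ x : Fin n) : ℕ) := by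
    intro x
    have step : ∀ k : ℕ, ∀ hk : k < n, k ≤ ((σ⁻¹ ⟨k, hk⟩ : Fin n) : ℕ) := by
      intro k
      induction k with
      | zero => intro hk; exact Nat.zero_le _
      | succ k IH =>
        intro hk
        have h1 := IH (by omega)
        have h2 : σ⁻¹ ⟨k, by omega⟩ < σ⁻¹ ⟨k + 1, hk⟩ := hinvsm (by simp [Fin.lt_def])
        rw [Fin.lt_def] at h2
        omega
    have := step (x : ℕ) x.isLt
    simpa using this
  ext x
  have h1 := hles x
  have h2 := hlesInv (σ x)
  simp only [Equiv.Perm.coe_inv, Equiv.symm_apply_apply] at h2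
  simp only [Equiv.Perm.one_apply]
  omega

lemma descent_exists (σ : Equiv.Perm (Fin n)) (hσ : σ ≠ 1) :
    ∃ c : ℕ, ∃ h : c + 1 < n, σ⁻¹ ⟨c + 1, h⟩ < σ⁻¹ ⟨c, by omega⟩ := by
  by_contra hcon
  push_neg at hcon
  apply hσ
  have : σ⁻¹ = 1 := by
    apply strictMono_eq_one
    intro c h
    rcases lt_or_gt_of_ne (inv_ne c h σ) with ha | hd
    · exact ha
    · exact absurd hd (not_lt.2 (hcon c h))
  calc σ = (σ⁻¹)⁻¹ := by simp
    _ = 1 := by rw [this]; simp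

def permOf (n : ℕ) (l : List ℕ) : Equiv.Perm (Fin n) :=
  l.foldl (fun acc c => sw n c * acc) 1

lemma permOf_nil : permOf n [] = 1 := rfl

lemma permOf_append (l : List ℕ) (c : ℕ) :
    permOf n (l ++ [c]) = sw n c * permOf n l := by
  simp [permOf, List.foldl_append]

lemma plen_permOf_le (l : List ℕ) : plen (permOf n l) ≤ l.length := by
  induction l using List.reverseRecOn with
  | nil => simp [permOf_nil, plen_one]
  | append_singleton l c IH =>
    rw [permOf_append]
    have := plen_swap_le c (permOf n l)
    simp only [List.length_append, List.length_singleton]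
    omega

lemma exists_reduced : ∀ k (σ : Equiv.Perm (Fin n)), plen σ = k →
    ∃ l : List ℕ, (∀ c ∈ l, c + 1 < n) ∧ permOf n l = σ ∧ l.length = plen σ := by
  intro k
  induction k using Nat.strong_induction_on with
  | _ k IH =>
    intro σ hk
    by_cases h1 : σ = 1
    · subst h1
      exact ⟨[], by simp, permOf_nil, by rw [List.length_nil, plen_one]⟩
    · obtain ⟨c, hc, hd⟩ := descent_exists σ h1
      have hdrop := plen_swap_desc c hc σ hd
      obtain ⟨l, hv, hp, hl⟩ := IH (plen (sw n c * σ)) (by omega) (sw n c * σ) rfl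
      refine ⟨l ++ [c], ?_, ?_, ?_⟩
      · intro d hdm
        rcases List.mem_append.1 hdm with h | h
        · exact hv d h
        · simp only [List.mem_singleton] at h; subst h; exact hc
      · rw [permOf_append, hp, ← mul_assoc, sw_mul_self', one_mul]
      · simp only [List.length_append, List.length_singleton]; omega

lemma cancel_sw (c : ℕ) (ρ : Equiv.Perm (Fin n)) : sw n c * (sw n c * ρ) = ρ := by
  rw [← mul_assoc, sw_mul_self', one_mul]

lemma braid_apply (c : ℕ) (h : c + 2 < n) (ρ : Equiv.Perm (Fin n)) :
    sw n c * (sw n (c + 1) * (sw n c * ρ)) = sw n (c + 1) * (sw n c * (sw n (c + 1) * ρ)) := by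
  have := congrArg (fun z => z * ρ) (sw_braid c h)
  simpa [mul_assoc] using this

lemma comm_apply (c d : ℕ) (h : c + 2 ≤ d) (ρ : Equiv.Perm (Fin n)) :
    sw n c * (sw n d * ρ) = sw n d * (sw n c * ρ) := by
  have := congrArg (fun z => z * ρ) (sw_comm c d h)
  simpa [mul_assoc] using this

lemma desc_disjoint (c d : ℕ) (hc : c + 1 < n)
    (hdis : c + 2 ≤ d ∨ d + 2 ≤ c)
    (σ : Equiv.Perm (Fin n))
    (h : σ⁻¹ ⟨c + 1, hc⟩ < σ⁻¹ ⟨c, by omega⟩) :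
    (sw n d * σ)⁻¹ ⟨c + 1, hc⟩ < (sw n d * σ)⁻¹ ⟨c, by omega⟩ := by
  rw [mulinv_apply, mulinv_apply,
    sw_apply_of_ne d _ (by simp only [Fin.val_mk]; omega) (by simp only [Fin.val_mk]; omega),
    sw_apply_of_ne d _ (by simp only [Fin.val_mk]; omega) (by simp only [Fin.val_mk]; omega)]
  exact h

lemma desc_adj₁ (c : ℕ) (h2 : c + 2 < n) (σ : Equiv.Perm (Fin n))
    (hdc : σ⁻¹ ⟨c + 1, by omega⟩ < σ⁻¹ ⟨c, by omega⟩)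
    (hdc1 : σ⁻¹ ⟨c + 2, h2⟩ < σ⁻¹ ⟨c + 1, by omega⟩) :
    (sw n c * σ)⁻¹ ⟨c + 2, h2⟩ < (sw n c * σ)⁻¹ ⟨c + 1, by omega⟩ := by
  rw [mulinv_apply, mulinv_apply]
  rw [sw_apply_of_ne c _ (by simp only [Fin.val_mk]; omega) (by simp only [Fin.val_mk]; omega)]
  rw [sw_app₂ c (by omega) _ (by simp only [Fin.val_mk])]
  exact lt_trans hdc1 hdc

lemma desc_adj₂ (c : ℕ) (h2 : c + 2 < n) (σ : Equiv.Perm (Fin n))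
    (hdc1 : σ⁻¹ ⟨c + 2, h2⟩ < σ⁻¹ ⟨c + 1, by omega⟩) :
    (sw n (c + 1) * (sw n c * σ))⁻¹ ⟨c + 1, by omega⟩ <
      (sw n (c + 1) * (sw n c * σ))⁻¹ ⟨c, by omega⟩ := by
  rw [mulinv_apply, mulinv_apply, mulinv_apply, mulinv_apply]
  rw [sw_app₁ (c+1) (by omega) _ (by simp only [Fin.val_mk])]
  rw [sw_apply_of_ne c _ (by simp only [Fin.val_mk]; omega) (by simp only [Fin.val_mk]; omega)]
  rw [sw_apply_of_ne (c+1) _ (by simp only [Fin.val_mk]; omega) (by simp only [Fin.val_mk]; omega)]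
  rw [sw_app₁ c (by omega) _ (by simp only [Fin.val_mk])]
  exact hdc1

lemma desc_adj₃ (c : ℕ) (h2 : c + 2 < n) (σ : Equiv.Perm (Fin n))
    (hdc : σ⁻¹ ⟨c + 1, by omega⟩ < σ⁻¹ ⟨c, by omega⟩)
    (hdc1 : σ⁻¹ ⟨c + 2, h2⟩ < σ⁻¹ ⟨c + 1, by omega⟩) :
    (sw n (c + 1) * σ)⁻¹ ⟨c + 1, by omega⟩ < (sw n (c + 1) * σ)⁻¹ ⟨c, by omega⟩ := by
  rw [mulinv_apply, mulinv_apply]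
  rw [sw_app₁ (c+1) (by omega) _ (by simp only [Fin.val_mk])]
  rw [sw_apply_of_ne (c+1) _ (by simp only [Fin.val_mk]; omega) (by simp only [Fin.val_mk]; omega)]
  exact lt_trans hdc1 hdc

lemma desc_adj₄ (c : ℕ) (h2 : c + 2 < n) (σ : Equiv.Perm (Fin n))
    (hdc : σ⁻¹ ⟨c + 1, by omega⟩ < σ⁻¹ ⟨c, by omega⟩) :
    (sw n c * (sw n (c + 1) * σ))⁻¹ ⟨c + 2, h2⟩ <
      (sw n c * (sw n (c + 1) * σ))⁻¹ ⟨c + 1, by omega⟩ := by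
  rw [mulinv_apply, mulinv_apply, mulinv_apply, mulinv_apply]
  rw [sw_apply_of_ne c _ (by simp only [Fin.val_mk]; omega) (by simp only [Fin.val_mk]; omega)]
  rw [sw_app₂ (c+1) (by omega) _ (by simp only [Fin.val_mk])]
  rw [sw_app₂ c (by omega) _ (by simp only [Fin.val_mk])]
  rw [sw_apply_of_ne (c+1) _ (by simp only [Fin.val_mk]; omega) (by simp only [Fin.val_mk]; omega)]
  exact hdc

def applyW {X : Type} (F : ℕ → X → X) (l : List ℕ) (x : X) : X :=
  l.foldl (fun x c => F c x) x

lemma applyW_append {X : Type} (F : ℕ → X → X) (l : List ℕ) (c : ℕ) (x : X) :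
    applyW F (l ++ [c]) x = F c (applyW F l x) := by
  simp [applyW]

lemma desc_of_concat (i : ℕ) (hvi : i + 1 < n) (τ : Equiv.Perm (Fin n))
    (hasc : τ⁻¹ ⟨i, by omega⟩ < τ⁻¹ ⟨i + 1, hvi⟩) :
    (sw n i * τ)⁻¹ ⟨i + 1, hvi⟩ < (sw n i * τ)⁻¹ ⟨i, by omega⟩ := by
  rw [mulinv_apply, mulinv_apply]
  rw [sw_app₂ i hvi _ (by simp only [Fin.val_mk])]
  rw [sw_app₁ i hvi _ (by simp only [Fin.val_mk])]
  exact hasc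

lemma matsumoto {X : Type} (F : ℕ → X → X)
    (hid : ∀ c, c + 1 < n → ∀ x, F c (F c x) = F c x)
    (hcomm : ∀ c d, c + 2 ≤ d → c + 1 < n → d + 1 < n → ∀ x, F c (F d x) = F d (F c x))
    (hbraid : ∀ c, c + 2 < n → ∀ x,
      F c (F (c + 1) (F c x)) = F (c + 1) (F c (F (c + 1) x))) :
    ∀ k (a b : List ℕ), (∀ c ∈ a, c + 1 < n) → (∀ c ∈ b, c + 1 < n) →
      a.length = k → b.length = k → permOf n a = permOf n b →
      plen (permOf n a) = k → ∀ x, applyW F a x = applyW F b x := by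
  intro k
  induction k using Nat.strong_induction_on with
  | _ k IH =>
  have key : ∀ m, m + 1 = k → ∀ (a' b' : List ℕ) (i j : ℕ), i < j →
      (∀ c ∈ a', c + 1 < n) → (∀ c ∈ b', c + 1 < n) → i + 1 < n → j + 1 < n →
      a'.length = m → b'.length = m →
      permOf n (a' ++ [i]) = permOf n (b' ++ [j]) →
      plen (permOf n (a' ++ [i])) = m + 1 →
      ∀ x, applyW F (a' ++ [i]) x = applyW F (b' ++ [j]) x := by
    intro m hm a' b' i j hij hva hvb hvi hvj hla hlb hperm hplen x
    obtain ⟨τa, hτa⟩ : ∃ t, t = permOf n a' := ⟨_, rfl⟩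
    obtain ⟨τb, hτb⟩ : ∃ t, t = permOf n b' := ⟨_, rfl⟩
    obtain ⟨σ, hσ⟩ : ∃ t, t = permOf n (a' ++ [i]) := ⟨_, rfl⟩
    have hpl : plen σ = m + 1 := by rw [hσ]; exact hplen
    have hσa : σ = sw n i * τa := by rw [hσ, permOf_append, ← hτa]
    have hσb : σ = sw n j * τb := by rw [hσ, hperm, permOf_append, ← hτb]
    have hta : τa = sw n i * σ := by rw [hσa, cancel_sw]
    have htb : τb = sw n j * σ := by rw [hσb, cancel_sw]
    have hpa : plen τa = m := by
      have h1 : plen τa ≤ m := by rw [hτa, ← hla]; exact plen_permOf_le a'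
      have h2 : plen σ ≤ plen τa + 1 := by rw [hσa]; exact plen_swap_le i τa
      omega
    have hpb : plen τb = m := by
      have h1 : plen τb ≤ m := by rw [hτb, ← hlb]; exact plen_permOf_le b'
      have h2 : plen σ ≤ plen τb + 1 := by rw [hσb]; exact plen_swap_le j τb
      omega
    have hasca : τa⁻¹ ⟨i, by omega⟩ < τa⁻¹ ⟨i + 1, hvi⟩ :=
      asc_of_plen_succ i hvi τa (by rw [← hσa, hpl, hpa])
    have hascb : τb⁻¹ ⟨j, by omega⟩ < τb⁻¹ ⟨j + 1, hvj⟩ :=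
      asc_of_plen_succ j hvj τb (by rw [← hσb, hpl, hpb])
    have hdi : σ⁻¹ ⟨i + 1, hvi⟩ < σ⁻¹ ⟨i, by omega⟩ := by
      rw [hσa]; exact desc_of_concat i hvi τa hasca
    have hdj : σ⁻¹ ⟨j + 1, hvj⟩ < σ⁻¹ ⟨j, by omega⟩ := by
      rw [hσb]; exact desc_of_concat j hvj τb hascb
    by_cases hadj : j = i + 1
    · -- adjacent case
      subst hadj
      have hi2 : i + 2 < n := by omega
      have d1 : τa⁻¹ ⟨i + 2, hi2⟩ < τa⁻¹ ⟨i + 1, by omega⟩ := by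
        rw [hta]; exact desc_adj₁ i hi2 σ hdi hdj
      have d2 : (sw n (i + 1) * τa)⁻¹ ⟨i + 1, by omega⟩ <
          (sw n (i + 1) * τa)⁻¹ ⟨i, by omega⟩ := by
        rw [hta]; exact desc_adj₂ i hi2 σ hdj
      obtain ⟨υ, hυ⟩ : ∃ t, t = sw n (i + 1) * τa := ⟨_, rfl⟩
      obtain ⟨γ, hγ⟩ : ∃ t, t = sw n i * υ := ⟨_, rfl⟩
      have hpυ : plen υ + 1 = m := by
        have := plen_swap_desc (i + 1) hi2 τa d1
        rw [← hυ] at this; omega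
      have hpγ : plen γ + 1 = plen υ := by
        have := plen_swap_desc i hvi υ (by rw [hυ]; exact d2)
        rw [← hγ] at this; omega
      obtain ⟨r, hrv, hrp, hrl⟩ := exists_reduced (plen γ) γ rfl
      have hrlen : r.length + 2 = m := by omega
      have hγexp : γ = sw n i * (sw n (i + 1) * (sw n i * σ)) := by
        rw [hγ, hυ, hta]
      have hwa : permOf n (r ++ [i, i + 1]) = τa := by
        have e : r ++ [i, i + 1] = (r ++ [i]) ++ [i + 1] := by simp
        rw [e, permOf_append, permOf_append, hrp]
        rw [hγ, cancel_sw, hυ, cancel_sw]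
      have hwb : permOf n (r ++ [i + 1, i]) = τb := by
        have e : r ++ [i + 1, i] = (r ++ [i + 1]) ++ [i] := by simp
        rw [e, permOf_append, permOf_append, hrp]
        rw [hγexp, braid_apply i hi2, cancel_sw, cancel_sw]
        exact htb.symm
      have iha : ∀ y, applyW F a' y = applyW F (r ++ [i, i + 1]) y := by
        intro y
        refine IH m (by omega) a' (r ++ [i, i + 1]) hva ?_ hla ?_ (by rw [hwa, hτa]) ?_ y
        · intro c hc
          rcases List.mem_append.1 hc with h | h
          · exact hrv c h
          · simp at h; rcases h with rfl | rfl <;> omega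
        · simp only [List.length_append, List.length_cons, List.length_nil]; omega
        · rw [← hτa, hpa]
      have ihb : ∀ y, applyW F b' y = applyW F (r ++ [i + 1, i]) y := by
        intro y
        refine IH m (by omega) b' (r ++ [i + 1, i]) hvb ?_ hlb ?_ (by rw [hwb, hτb]) ?_ y
        · intro c hc
          rcases List.mem_append.1 hc with h | h
          · exact hrv c h
          · simp at h; rcases h with rfl | rfl <;> omega
        · simp only [List.length_append, List.length_cons, List.length_nil]; omega
        · rw [← hτb, hpb]
      rw [applyW_append, applyW_append, iha x, ihb x]
      have e1 : r ++ [i, i + 1] = (r ++ [i]) ++ [i + 1] := by simp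
      have e2 : r ++ [i + 1, i] = (r ++ [i + 1]) ++ [i] := by simp
      rw [e1, e2, applyW_append, applyW_append, applyW_append, applyW_append]
      exact hbraid i hi2 (applyW F r x)
    · -- disjoint case
      have hij2 : i + 2 ≤ j := by omega
      have d1 : τb⁻¹ ⟨i + 1, hvi⟩ < τb⁻¹ ⟨i, by omega⟩ := by
        rw [htb]; exact desc_disjoint i j hvi (Or.inl hij2) σ hdi
      obtain ⟨γ, hγ⟩ : ∃ t, t = sw n i * τb := ⟨_, rfl⟩
      have hpγ : plen γ + 1 = m := by
        have := plen_swap_desc i hvi τb d1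
        rw [← hγ] at this; omega
      obtain ⟨r, hrv, hrp, hrl⟩ := exists_reduced (plen γ) γ rfl
      have hrlen : r.length + 1 = m := by omega
      have hwb : permOf n (r ++ [i]) = τb := by
        rw [permOf_append, hrp, hγ, cancel_sw]
      have hwa : permOf n (r ++ [j]) = τa := by
        rw [permOf_append, hrp, hγ, htb]
        rw [comm_apply i j hij2, cancel_sw]
        exact hta.symm
      have iha : ∀ y, applyW F a' y = applyW F (r ++ [j]) y := by
        intro y
        refine IH m (by omega) a' (r ++ [j]) hva ?_ hla ?_ (by rw [hwa, hτa]) ?_ y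
        · intro c hc
          rcases List.mem_append.1 hc with h | h
          · exact hrv c h
          · simp at h; subst h; exact hvj
        · simp only [List.length_append, List.length_singleton]; omega
        · rw [← hτa, hpa]
      have ihb : ∀ y, applyW F b' y = applyW F (r ++ [i]) y := by
        intro y
        refine IH m (by omega) b' (r ++ [i]) hvb ?_ hlb ?_ (by rw [hwb, hτb]) ?_ y
        · intro c hc
          rcases List.mem_append.1 hc with h | h
          · exact hrv c h
          · simp at h; subst h; exact hvi
        · simp only [List.length_append, List.length_singleton]; omega
        · rw [← hτb, hpb]
      rw [applyW_append, applyW_append, iha x, ihb x]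
      rw [applyW_append, applyW_append]
      exact hcomm i j hij2 hvi hvj (applyW F r x)
  -- main case analysis
  intro a b hva hvb hla hlb hperm hplen x
  rcases List.eq_nil_or_concat a with rfl | ⟨a', i, rfl⟩
  · have hb0 : b.length = 0 := by rw [hlb, ← hla]; rfl
    have hbnil : b = [] := List.eq_nil_of_length_eq_zero hb0
    subst hbnil; rfl
  rcases List.eq_nil_or_concat b with rfl | ⟨b', j, rfl⟩
  · exfalso
    simp only [List.concat_eq_append, List.length_append, List.length_singleton] at hla
    rw [← hlb] at hla
    simp at hla
  simp only [List.concat_eq_append] at hva hvb hla hlb hperm hplen ⊢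
  have hk : a'.length + 1 = k := by simpa using hla
  have hla' : a'.length = k - 1 := by omega
  have hlb' : b'.length = k - 1 := by
    have : b'.length + 1 = k := by simpa using hlb
    omega
  have hvi : i + 1 < n := hva i (by simp)
  have hvj : j + 1 < n := hvb j (by simp)
  rcases Nat.lt_trichotomy i j with hij | heq | hji
  · exact key (k - 1) (by omega) a' b' i j hij
      (fun c hc => hva c (by simp [hc])) (fun c hc => hvb c (by simp [hc]))
      hvi hvj hla' hlb' hperm (by rw [hplen]; omega) x
  · subst heq
    have hcancel : permOf n a' = permOf n b' := by
      rw [permOf_append, permOf_append] at hperm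
      exact mul_left_cancel hperm
    have hpa : plen (permOf n a') = k - 1 := by
      have h1 : plen (permOf n a') ≤ k - 1 := by rw [← hla']; exact plen_permOf_le a'
      have h2 : plen (permOf n (a' ++ [i])) ≤ plen (permOf n a') + 1 := by
        rw [permOf_append]; exact plen_swap_le i (permOf n a')
      omega
    have hmain := IH (k - 1) (by omega) a' b'
      (fun c hc => hva c (by simp [hc])) (fun c hc => hvb c (by simp [hc]))
      hla' hlb' hcancel hpa x
    rw [applyW_append, applyW_append, hmain]
  · have hsymm := key (k - 1) (by omega) b' a' j i hji
      (fun c hc => hvb c (by simp [hc])) (fun c hc => hva c (by simp [hc]))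
      hvj hvi hlb' hla' hperm.symm (by rw [← hperm, hplen]; omega) x
    exact hsymm.symm

lemma two_mul_card_lt (n : ℕ) :
    2 * (Finset.univ.filter fun q : Fin n × Fin n => q.1 < q.2).card = n * n - n := by
  have hswap : (Finset.univ.filter fun q : Fin n × Fin n => q.1 < q.2).card
      = (Finset.univ.filter fun q : Fin n × Fin n => q.2 < q.1).card := by
    apply Finset.card_bij (fun q _ => Prod.swap q)
    · intro q hq
      simp only [Finset.mem_filter, Finset.mem_univ, true_and] at hq ⊢
      exact hq
    · intro q1 h1 q2 h2 he
      exact Prod.swap_injective he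
    · intro q hq
      refine ⟨q.swap, ?_, by simp⟩
      simp only [Finset.mem_filter, Finset.mem_univ, true_and] at hq ⊢
      exact hq
  have hdisj : Disjoint (Finset.univ.filter fun q : Fin n × Fin n => q.1 < q.2)
      (Finset.univ.filter fun q : Fin n × Fin n => q.2 < q.1) := by
    rw [Finset.disjoint_left]
    intro q h1 h2
    simp only [Finset.mem_filter, Finset.mem_univ, true_and] at h1 h2
    exact absurd h2 (not_lt.2 (le_of_lt h1))
  have hunion : (Finset.univ.filter fun q : Fin n × Fin n => q.1 < q.2) ∪
      (Finset.univ.filter fun q : Fin n × Fin n => q.2 < q.1)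
      = (Finset.univ : Finset (Fin n)).offDiag := by
    ext q
    constructor
    · intro hq
      rcases Finset.mem_union.1 hq with h | h <;>
        simp only [Finset.mem_filter, Finset.mem_univ, true_and] at h
      · exact Finset.mem_offDiag.2 ⟨Finset.mem_univ _, Finset.mem_univ _, ne_of_lt h⟩
      · exact Finset.mem_offDiag.2 ⟨Finset.mem_univ _, Finset.mem_univ _, ne_of_gt h⟩
    · intro hq
      obtain ⟨-, -, hne⟩ := Finset.mem_offDiag.1 hq
      rcases lt_or_gt_of_ne hne with h | h
      · exact Finset.mem_union_left _
          (Finset.mem_filter.2 ⟨Finset.mem_univ _, h⟩)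
      · exact Finset.mem_union_right _
          (Finset.mem_filter.2 ⟨Finset.mem_univ _, h⟩)
  have hcard := Finset.card_union_of_disjoint hdisj
  rw [hunion] at hcard
  have hoff : ((Finset.univ : Finset (Fin n)).offDiag).card = n * n - n := by
    rw [Finset.offDiag_card]
    simp
  omega

lemma plen_le_bound (σ : Equiv.Perm (Fin n)) : 2 * plen σ ≤ n * n - n := by
  have h1 : plen σ ≤ (Finset.univ.filter fun q : Fin n × Fin n => q.1 < q.2).card := by
    apply Finset.card_le_card
    intro q hq
    simp only [invs, Finset.mem_filter, Finset.mem_univ, true_and] at hq ⊢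
    exact hq.1
  have := two_mul_card_lt n
  omega

lemma main_bound {X : Type} (F : ℕ → X → X)
    (hid : ∀ c, c + 1 < n → ∀ x, F c (F c x) = F c x)
    (hcomm : ∀ c d, c + 2 ≤ d → c + 1 < n → d + 1 < n → ∀ x, F c (F d x) = F d (F c x))
    (hbraid : ∀ c, c + 2 < n → ∀ x,
      F c (F (c + 1) (F c x)) = F (c + 1) (F c (F (c + 1) x)))
    (nsteps : ℕ) (f : ℕ → X) (pos : ℕ → ℕ)
    (hstep : ∀ k < nsteps, pos k + 1 < n ∧ f (k + 1) = F (pos k) (f k) ∧ f (k + 1) ≠ f k) :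
    2 * nsteps ≤ n * n - n := by
  have hw : ∀ k : ℕ, (List.range (k + 1)).map pos = (List.range k).map pos ++ [pos k] := by
    intro k
    rw [List.range_succ, List.map_append]
    rfl
  have hval : ∀ k, k ≤ nsteps → ∀ c ∈ (List.range k).map pos, c + 1 < n := by
    intro k hk c hc
    simp only [List.mem_map, List.mem_range] at hc
    obtain ⟨u, hu, rfl⟩ := hc
    exact (hstep u (by omega)).1
  have claim : ∀ k, k ≤ nsteps →
      plen (permOf n ((List.range k).map pos)) = k ∧
      applyW F ((List.range k).map pos) (f 0) = f k := by
    intro k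
    induction k with
    | zero =>
      intro _
      constructor
      · simp only [List.range_zero, List.map_nil]
        rw [permOf_nil, plen_one]
      · simp [applyW]
    | succ k IHk =>
      intro hk
      obtain ⟨hp, hx⟩ := IHk (by omega)
      obtain ⟨hvpos, hfs, hne⟩ := hstep k (by omega)
      have happ : applyW F ((List.range (k + 1)).map pos) (f 0) = f (k + 1) := by
        rw [hw k, applyW_append, hx, ← hfs]
      refine ⟨?_, happ⟩
      rw [hw k, permOf_append]
      rcases lt_or_gt_of_ne (inv_ne (pos k) hvpos (permOf n ((List.range k).map pos))) with
        ha | hd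
      · rw [plen_swap_asc (pos k) hvpos _ ha, hp]
      · exfalso
        have hdrop := plen_swap_desc (pos k) hvpos _ hd
        obtain ⟨r, hrv, hrp, hrl⟩ :=
          exists_reduced (plen (sw n (pos k) * permOf n ((List.range k).map pos)))
            (sw n (pos k) * permOf n ((List.range k).map pos)) rfl
        have hrlen : r.length + 1 = k := by omega
        have hrperm : permOf n (r ++ [pos k]) = permOf n ((List.range k).map pos) := by
          rw [permOf_append, hrp, cancel_sw]
        have hmats := matsumoto F hid hcomm hbraid k ((List.range k).map pos) (r ++ [pos k])
          (hval k (by omega))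
          (by
            intro c hc
            rcases List.mem_append.1 hc with h | h
            · exact hrv c h
            · simp only [List.mem_singleton] at h; subst h; exact hvpos)
          (by simp) (by simp only [List.length_append, List.length_singleton]; omega)
          hrperm.symm hp (f 0)
        rw [hx, applyW_append] at hmats
        have : f (k + 1) = f k := by
          rw [hfs, hmats, hid (pos k) hvpos, ← hmats]
        exact hne this
  have hfin := (claim nsteps le_rfl).1
  have := plen_le_bound (permOf n ((List.range nsteps).map pos))
  omega

end Stmt8X


namespace Stmt8

variable {α : Type}

/-- Apply the two-letter normalisation `nf` at (1-indexed) position `i` of a word. -/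
def applyAtL (nf : α → α → List α) : ℕ → List α → List α
  | 1, x :: y :: s => nf x y ++ s
  | n + 2, x :: s => x :: applyAtL nf (n + 1) s
  | _, w => w

/-- Apply the two-letter normalisation along a finite sequence of positions
(the first position in the list is applied first). -/
def seqApplyL (nf : α → α → List α) (l : List ℕ) (w : List α) : List α :=
  l.foldl (fun w i => applyAtL nf i w) w

/-- The one-step rewriting relation associated with a quadratic normalisation:
replace some non-normal length-two factor `ab` by `N̄(ab)`. -/
def Rw (N : List α → List α) (u v : List α) : Prop :=
  ∃ (p s : List α) (x y : α),
    u = p ++ [x, y] ++ s ∧ N [x, y] ≠ [x, y] ∧ v = p ++ N [x, y] ++ s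


section ListLemmas

variable {α : Type} (nf : α → α → List α)

lemma applyAtL_nil (i : ℕ) : applyAtL nf i [] = [] := by
  rcases i with _ | _ | i <;> rfl

lemma applyAtL_zero (w : List α) : applyAtL nf 0 w = w := by
  rcases w with _ | ⟨x, s⟩ <;> rfl

lemma applyAtL_one_cons (x y : α) (s : List α) :
    applyAtL nf 1 (x :: y :: s) = nf x y ++ s := rfl

lemma applyAtL_succ2 (n : ℕ) (x : α) (s : List α) :
    applyAtL nf (n + 2) (x :: s) = x :: applyAtL nf (n + 1) s := rfl

lemma applyAtL_oob : ∀ (i : ℕ) (w : List α), w.length ≤ i → applyAtL nf i w = w := by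
  intro i w
  induction w generalizing i with
  | nil => intro _; exact applyAtL_nil nf i
  | cons x s IH =>
    intro h
    rcases i with _ | _ | i
    · exact applyAtL_zero nf _
    · simp only [List.length_cons] at h
      have : s = [] := List.eq_nil_of_length_eq_zero (by omega)
      subst this; rfl
    · rw [applyAtL_succ2]
      rw [IH (i + 1) (by simp at h; omega)]

lemma applyAtL_length (hnf : ∀ x y, (nf x y).length = 2) :
    ∀ (i : ℕ) (w : List α), (applyAtL nf i w).length = w.length := by
  intro i w
  induction w generalizing i with
  | nil => rw [applyAtL_nil]
  | cons x s IH =>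
    rcases i with _ | _ | i
    · rw [applyAtL_zero]
    · rcases s with _ | ⟨y, t⟩
      · rfl
      · rw [applyAtL_one_cons]
        simp only [List.length_append, List.length_cons, hnf]
        omega
    · rw [applyAtL_succ2]
      simp [IH (i + 1)]

lemma applyAtL_append_of_le :
    ∀ (i : ℕ) (t s : List α), 1 ≤ i → i + 1 ≤ t.length →
      applyAtL nf i (t ++ s) = applyAtL nf i t ++ s := by
  intro i t
  induction t generalizing i with
  | nil => intro s h1 h2; simp at h2
  | cons x t' IH =>
    intro s h1 h2
    rcases i with _ | _ | i
    · omega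
    · rcases t' with _ | ⟨y, t''⟩
      · simp at h2
      · rw [List.cons_append, List.cons_append, applyAtL_one_cons, applyAtL_one_cons]
        simp
    · rw [List.cons_append, applyAtL_succ2, applyAtL_succ2]
      rw [IH (i + 1) s (by omega) (by simp at h2; omega)]
      simp

lemma applyAtL_ctx :
    ∀ (pr : List α) (i : ℕ) (t s : List α), 1 ≤ i → i + 1 ≤ t.length →
      applyAtL nf (pr.length + i) (pr ++ t ++ s) = pr ++ applyAtL nf i t ++ s := by
  intro pr
  induction pr with
  | nil =>
    intro i t s h1 h2
    simpa using applyAtL_append_of_le nf i t s h1 h2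
  | cons a pr' IH =>
    intro i t s h1 h2
    have hpos : a :: pr' ++ t ++ s = a :: (pr' ++ t ++ s) := by simp
    have hlen : (a :: pr').length + i = (pr'.length + i - 1) + 2 := by
      simp only [List.length_cons]; omega
    rw [hpos, hlen, applyAtL_succ2]
    have hback : pr'.length + i - 1 + 1 = pr'.length + i := by omega
    rw [hback, IH i t s h1 h2]
    simp

lemma exists_decomp :
    ∀ (c : ℕ) (w : List α), c + 2 ≤ w.length →
      ∃ (pr : List α) (a b : α) (s : List α), w = pr ++ a :: b :: s ∧ pr.length = c := by
  intro c
  induction c with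
  | zero =>
    intro w hw
    rcases w with _ | ⟨a, _ | ⟨b, s⟩⟩
    · simp at hw
    · simp at hw
    · exact ⟨[], a, b, s, rfl, rfl⟩
  | succ c IH =>
    intro w hw
    rcases w with _ | ⟨x, w'⟩
    · simp at hw
    · obtain ⟨pr, a, b, s, hw', hpr⟩ := IH w' (by simp at hw; omega)
      exact ⟨x :: pr, a, b, s, by rw [hw']; rfl, by simp [hpr]⟩

end ListLemmas

section Relations

variable {α : Type} (nf : α → α → List α)
  (hnf2 : ∀ x y : α, (nf x y).length = 2)
  (hidem : ∀ (x y a b : α), nf x y = [a, b] → nf a b = [a, b])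

-- the rewriting operator at 0-indexed position c
lemma applyAtL_window (pr : List α) (a b : α) (s : List α) :
    applyAtL nf (pr.length + 1) (pr ++ a :: b :: s) = pr ++ nf a b ++ s := by
  have h2 : applyAtL nf 1 [a, b] = nf a b := by
    rw [applyAtL_one_cons (nf := nf) a b []]
    simp
  have h1 := applyAtL_ctx nf pr 1 [a, b] s (le_refl 1) (by simp)
  rw [h2] at h1
  simpa using h1

include hnf2 hidem in
lemma rel_idem (c : ℕ) (w : List α) :
    applyAtL nf (c + 1) (applyAtL nf (c + 1) w) = applyAtL nf (c + 1) w := by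
  by_cases h : c + 2 ≤ w.length
  · obtain ⟨pr, a, b, s, rfl, hpr⟩ := exists_decomp c w h
    obtain ⟨a', b', hab⟩ := List.length_eq_two.1 (hnf2 a b)
    have h1 : applyAtL nf (c + 1) (pr ++ a :: b :: s) = pr ++ nf a b ++ s := by
      rw [← hpr]; exact applyAtL_window nf pr a b s
    rw [h1, hab]
    have h2 : applyAtL nf (c + 1) (pr ++ [a', b'] ++ s) = pr ++ nf a' b' ++ s := by
      rw [← hpr]
      simpa using applyAtL_window nf pr a' b' s
    rw [h2, hidem a b a' b' hab]
  · have hw : w.length ≤ c + 1 := by omega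
    rw [applyAtL_oob nf (c + 1) w hw, applyAtL_oob nf (c + 1) w hw]

include hnf2 in
lemma rel_comm (c d : ℕ) (hcd : c + 2 ≤ d) (w : List α) :
    applyAtL nf (c + 1) (applyAtL nf (d + 1) w) =
      applyAtL nf (d + 1) (applyAtL nf (c + 1) w) := by
  by_cases h : d + 2 ≤ w.length
  · -- both windows exist
    obtain ⟨P, u, v, S, rfl, hP⟩ := exists_decomp d w h
    obtain ⟨pr, a, b, mid, hPd, hpr⟩ := exists_decomp c P (by omega)
    obtain ⟨a', b', hab⟩ := List.length_eq_two.1 (hnf2 a b)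
    obtain ⟨u', v', huv⟩ := List.length_eq_two.1 (hnf2 u v)
    subst hPd
    have e1 : (pr ++ a :: b :: mid) ++ u :: v :: S = pr ++ a :: b :: (mid ++ u :: v :: S) := by
      simp
    have hFd : applyAtL nf (d + 1) ((pr ++ a :: b :: mid) ++ u :: v :: S)
        = (pr ++ a :: b :: mid) ++ nf u v ++ S := by
      rw [← hP]; exact applyAtL_window nf _ u v S
    have hFc : applyAtL nf (c + 1) ((pr ++ a :: b :: mid) ++ u :: v :: S)
        = pr ++ nf a b ++ (mid ++ u :: v :: S) := by
      rw [e1, ← hpr]; exact applyAtL_window nf pr a b _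
    rw [hFd, hFc]
    -- now apply the other operator to each
    have hFc2 : applyAtL nf (c + 1) ((pr ++ a :: b :: mid) ++ nf u v ++ S)
        = pr ++ nf a b ++ (mid ++ nf u v ++ S) := by
      have e2 : (pr ++ a :: b :: mid) ++ nf u v ++ S
          = pr ++ a :: b :: (mid ++ nf u v ++ S) := by simp
      rw [e2, ← hpr]
      exact applyAtL_window nf pr a b (mid ++ nf u v ++ S)
    have hFd2 : applyAtL nf (d + 1) (pr ++ nf a b ++ (mid ++ u :: v :: S))
        = pr ++ nf a b ++ (mid ++ nf u v ++ S) := by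
      have e3 : pr ++ nf a b ++ (mid ++ u :: v :: S)
          = (pr ++ nf a b ++ mid) ++ u :: v :: S := by simp
      have hlen2 : (pr ++ nf a b ++ mid).length = d := by
        have h' := hP
        simp only [List.length_append, List.length_cons] at h'
        simp only [List.length_append, hnf2 a b]
        omega
      rw [e3, ← hlen2]
      rw [applyAtL_window nf (pr ++ nf a b ++ mid) u v S]
      simp
    rw [hFc2, hFd2]
  · -- d window out of range
    have hw : w.length ≤ d + 1 := by omega
    rw [applyAtL_oob nf (d + 1) w hw]
    rw [applyAtL_oob nf (d + 1) (applyAtL nf (c + 1) w)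
      (by rw [applyAtL_length nf hnf2]; exact hw)]

include hnf2 hidem in
lemma rel_braid
    (hbr : ∀ x y z : α,
      applyAtL nf 1 (applyAtL nf 2 (applyAtL nf 1 [x, y, z])) =
        applyAtL nf 2 (applyAtL nf 1 (applyAtL nf 2 [x, y, z])))
    (c : ℕ) (w : List α) :
    applyAtL nf (c + 1) (applyAtL nf (c + 1 + 1) (applyAtL nf (c + 1) w)) =
      applyAtL nf (c + 1 + 1) (applyAtL nf (c + 1) (applyAtL nf (c + 1 + 1) w)) := by
  by_cases h : c + 3 ≤ w.length
  · obtain ⟨pr, x, y, s', rfl, hpr⟩ := exists_decomp c w (by omega)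
    rcases s' with _ | ⟨z, s⟩
    · exfalso
      have hl : (pr ++ x :: y :: ([] : List α)).length = c + 2 := by simp [hpr]
      omega
    -- w = pr ++ x :: y :: z :: s ; use ctx with t = [x,y,z]
    have hw3 : pr ++ x :: y :: z :: s = pr ++ [x, y, z] ++ s := by simp
    have hlen3 : ∀ t : List α, t.length = 3 →
        (applyAtL nf 1 t).length = 3 ∧ (applyAtL nf 2 t).length = 3 := by
      intro t ht
      rw [applyAtL_length nf hnf2, applyAtL_length nf hnf2, ht]
      exact ⟨rfl, rfl⟩
    have hctx1 : ∀ t s₀ : List α, t.length = 3 →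
        applyAtL nf (c + 1) (pr ++ t ++ s₀) = pr ++ applyAtL nf 1 t ++ s₀ := by
      intro t s₀ ht
      have := applyAtL_ctx nf pr 1 t s₀ (by omega) (by omega)
      rwa [hpr] at this
    have hctx2 : ∀ t s₀ : List α, t.length = 3 →
        applyAtL nf (c + 1 + 1) (pr ++ t ++ s₀) = pr ++ applyAtL nf 2 t ++ s₀ := by
      intro t s₀ ht
      have := applyAtL_ctx nf pr 2 t s₀ (by omega) (by omega)
      rwa [show pr.length + 2 = c + 1 + 1 by omega] at this
    rw [hw3]
    rw [hctx1 [x, y, z] s rfl]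
    rw [hctx2 (applyAtL nf 1 [x, y, z]) s (hlen3 [x, y, z] rfl).1]
    rw [hctx1 (applyAtL nf 2 (applyAtL nf 1 [x, y, z])) s
      (hlen3 (applyAtL nf 1 [x, y, z]) (hlen3 [x, y, z] rfl).1).2]
    rw [hctx2 [x, y, z] s rfl]
    rw [hctx1 (applyAtL nf 2 [x, y, z]) s (hlen3 [x, y, z] rfl).2]
    rw [hctx2 (applyAtL nf 1 (applyAtL nf 2 [x, y, z])) s
      (hlen3 (applyAtL nf 2 [x, y, z]) (hlen3 [x, y, z] rfl).2).1]
    rw [hbr x y z]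
  · -- the (c+1) window (position c+1+1) is out of range: w.length ≤ c + 2
    have hlen := applyAtL_length nf hnf2
    have hoob2 : ∀ u : List α, u.length = w.length →
        applyAtL nf (c + 1 + 1) u = u := by
      intro u hu
      exact applyAtL_oob nf _ u (by omega)
    rw [hoob2 w rfl, hoob2 (applyAtL nf (c + 1) w) (hlen _ _)]
    exact rel_idem nf hnf2 hidem c w

end Relations

/-- for a quadratic normalisation `(Γ,N)` of breadth `(3,3)`, every
rewriting sequence starting from a word of length `p` has length at most `p(p−1)/2`. -/
theorem rewriting_length_bound_breadth_33
    {Γ : Type} [Fintype Γ] [Nonempty Γ]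
    (N : List Γ → List Γ)
    (hlen : ∀ w : List Γ, (N w).length = w.length)
    (hone : ∀ x : Γ, N [x] = [x])
    (habs : ∀ u w v : List Γ, w ≠ [] → N (u ++ N w ++ v) = N (u ++ w ++ v))
    (hquad₁ : ∀ w : List Γ, w ≠ [] →
      (N w = w ↔ ∀ p s : List Γ, ∀ x y : Γ, w = p ++ [x, y] ++ s → N [x, y] = [x, y]))
    (hquad₂ : ∀ w : List Γ, w ≠ [] →
      ∃ l : List ℕ, N w = seqApplyL (fun x y => N [x, y]) l w)
    (hbreadth : ∀ x y z : Γ,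
      N [x, y, z] = seqApplyL (fun a b => N [a, b]) [1, 2, 1] [x, y, z] ∧
      N [x, y, z] = seqApplyL (fun a b => N [a, b]) [2, 1, 2] [x, y, z]) :
    ∀ (p n : ℕ) (f : ℕ → List Γ), (f 0).length = p →
      (∀ i < n, Rw N (f i) (f (i + 1))) → n ≤ p * (p - 1) / 2 := by
  intro p n f hp hsteps
  classical
  obtain ⟨nf, hnfdef⟩ : ∃ nf : Γ → Γ → List Γ, nf = fun x y => N [x, y] := ⟨_, rfl⟩
  have hnfapp : ∀ x y : Γ, nf x y = N [x, y] := by intro x y; rw [hnfdef]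
  have hnf2 : ∀ x y : Γ, (nf x y).length = 2 := by
    intro x y; rw [hnfapp]; simpa using hlen [x, y]
  have hNN : ∀ x y : Γ, N (N [x, y]) = N [x, y] := by
    intro x y
    have := habs [] [x, y] [] (by simp)
    simpa using this
  have hidem : ∀ x y a b : Γ, nf x y = [a, b] → nf a b = [a, b] := by
    intro x y a b hab
    rw [hnfapp] at hab ⊢
    rw [← hab]
    exact hNN x y
  have hbr : ∀ x y z : Γ,
      applyAtL nf 1 (applyAtL nf 2 (applyAtL nf 1 [x, y, z])) =
        applyAtL nf 2 (applyAtL nf 1 (applyAtL nf 2 [x, y, z])) := by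
    intro x y z
    have h1 := (hbreadth x y z).1
    have h2 := (hbreadth x y z).2
    rw [hnfdef]
    have e1 : seqApplyL (fun a b => N [a, b]) [1, 2, 1] [x, y, z]
        = applyAtL (fun a b => N [a, b]) 1
            (applyAtL (fun a b => N [a, b]) 2
              (applyAtL (fun a b => N [a, b]) 1 [x, y, z])) := rfl
    have e2 : seqApplyL (fun a b => N [a, b]) [2, 1, 2] [x, y, z]
        = applyAtL (fun a b => N [a, b]) 2
            (applyAtL (fun a b => N [a, b]) 1
              (applyAtL (fun a b => N [a, b]) 2 [x, y, z])) := rfl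
    rw [← e1, ← e2, ← h1, ← h2]
  have hflen : ∀ i, i ≤ n → (f i).length = p := by
    intro i
    induction i with
    | zero => intro _; exact hp
    | succ i IHi =>
      intro hi
      obtain ⟨pr, s, x, y, hu, hne, hv⟩ := hsteps i (by omega)
      have hprev := IHi (by omega)
      rw [hu] at hprev
      rw [hv]
      simp only [List.length_append, List.length_cons, List.length_nil] at hprev ⊢
      rw [hlen [x, y]]
      simp only [List.length_cons, List.length_nil]
      omega
  have hstepdata : ∀ i, i < n → ∃ c : ℕ, c + 1 < p ∧
      f (i + 1) = applyAtL nf (c + 1) (f i) ∧ f (i + 1) ≠ f i := by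
    intro i hi
    obtain ⟨pr, s, x, y, hu, hne, hv⟩ := hsteps i hi
    refine ⟨pr.length, ?_, ?_, ?_⟩
    · have := hflen i (by omega)
      rw [hu] at this
      simp only [List.length_append, List.length_cons, List.length_nil] at this
      omega
    · rw [hu, hv]
      have ea : pr ++ [x, y] ++ s = pr ++ x :: y :: s := by simp
      rw [ea, applyAtL_window nf pr x y s, hnfapp]
    · rw [hu, hv]
      intro heq
      apply hne
      rw [List.append_assoc, List.append_assoc] at heq
      have h1 := List.append_cancel_left heq
      exact List.append_cancel_right h1
  choose cfun hcfun using hstepdata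
  obtain ⟨pos, hposdef⟩ : ∃ pos : ℕ → ℕ,
      pos = fun i => if h : i < n then cfun i h else 0 := ⟨_, rfl⟩
  have hb := Stmt8X.main_bound (n := p) (fun c w => applyAtL nf (c + 1) w)
    (fun c _ x => rel_idem nf hnf2 hidem c x)
    (fun c d hcd _ _ x => rel_comm nf hnf2 c d hcd x)
    (fun c _ x => rel_braid nf hnf2 hidem hbr c x)
    n f pos ?_
  · cases p with
    | zero =>
      simp only [Nat.zero_mul, Nat.zero_sub] at hb
      omega
    | succ q =>
      have hexp : (q + 1) * (q + 1) = (q + 1) * q + (q + 1) := Nat.mul_succ (q + 1) q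
      have hgoal : (q + 1) - 1 = q := rfl
      rw [hgoal]
      have harith : 2 * n ≤ (q + 1) * (q + 1) - (q + 1) := hb
      generalize hA : (q + 1) * q = A at hexp ⊢
      generalize hB : (q + 1) * (q + 1) = B at hexp harith
      omega
  · intro k hk
    have hc := hcfun k hk
    have hpos : pos k = cfun k hk := by rw [hposdef]; simp [hk]
    exact ⟨by rw [hpos]; exact hc.1, by rw [hpos]; exact hc.2.1, hc.2.2⟩

end Stmt8
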